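/- In Thompson's group F (infinite presentation), let i ≥ 1, z = x_0^4 x_1^{2i} x_4 x_{2i+6} x_{2i+5}^{-2} x_2^{-2i} x_0^{-4}, w = x_0^4 x_1^{2i} x_2 x_5 x_{2i+6} x_{2i+8} x_{2i+7}^{-2} x_{2i+5}^{-1} x_3^{-1} x_2^{-2i} x_0^{-4}, and p = z^{-1} w. Then p = x_0³ x_1^{2i+1} x_{2i+5}³ x_{2i+6}^{-2} x_{2i+4}^{-1} x_2^{-1} x_1^{-2i} x_0^{-3}. -/

import Mathlib

def thompsonRels : Set (FreeGroup ℕ) :=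
  {r | ∃ i j : ℕ, i < j ∧
    r = FreeGroup.of j * FreeGroup.of i * (FreeGroup.of (j + 1))⁻¹ * (FreeGroup.of i)⁻¹}

abbrev ThompsonF : Type := PresentedGroup thompsonRels

def x (n : ℕ) : ThompsonF := PresentedGroup.of n

section Helpers

lemma xrel {i j : ℕ} (h : i < j) : x j * x i = x i * x (j + 1) := by
  have h1 : (QuotientGroup.mk (FreeGroup.of j * FreeGroup.of i * (FreeGroup.of (j + 1))⁻¹ *
      (FreeGroup.of i)⁻¹) : ThompsonF) = 1 :=
    (QuotientGroup.eq_one_iff _).mpr (Subgroup.subset_normalClosure ⟨i, j, h, rfl⟩)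
  have h2 : x j * x i * (x (j+1))⁻¹ * (x i)⁻¹ = 1 := by
    have h3 : PresentedGroup.mk thompsonRels (FreeGroup.of j * FreeGroup.of i *
        (FreeGroup.of (j + 1))⁻¹ * (FreeGroup.of i)⁻¹) = 1 := h1
    simpa [x, PresentedGroup.of, map_mul, map_inv] using h3
  calc x j * x i = (x j * x i * (x (j+1))⁻¹ * (x i)⁻¹) * x i * (x i)⁻¹ * x i * x (j+1) := by
        group
    _ = x i * x (j + 1) := by rw [h2]; group

lemma xshift {i j : ℕ} (h : i < j) (n : ℕ) : x j * x i ^ n = x i ^ n * x (j + n) := by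
  induction n with
  | zero => simp
  | succ n ih =>
    have h2 : i < j + n := by omega
    calc x j * x i ^ (n+1) = (x j * x i ^ n) * x i := by rw [pow_succ, mul_assoc]
      _ = x i ^ n * (x (j+n) * x i) := by rw [ih, mul_assoc]
      _ = x i ^ n * (x i * x (j+n+1)) := by rw [xrel h2]
      _ = x i ^ (n+1) * x (j + (n+1)) := by rw [pow_succ]; group

/-- Main move lemma: `x_j^s` moves right past `x_i^n`, becoming `x_{j+n}^s`, for `i < j`. -/
lemma mv {i j : ℕ} (s n k : ℕ) (h : i < j) (hk : k = j + n) :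
    x j ^ s * x i ^ n = x i ^ n * x k ^ s := by
  subst hk
  induction s with
  | zero => simp
  | succ s ih =>
    calc x j ^ (s+1) * x i ^ n = x j ^ s * (x j * x i ^ n) := by rw [pow_succ]; group
      _ = (x j ^ s * x i ^ n) * x (j+n) := by rw [xshift h]; group
      _ = x i ^ n * (x (j+n) ^ s * x (j+n)) := by rw [ih]; group
      _ = x i ^ n * x (j+n) ^ (s+1) := by rw [pow_succ]

lemma mv1 {i j : ℕ} (k : ℕ) (h : i < j) (hk : k = j + 1) : x j * x i = x i * x k := by
  have := mv 1 1 k h (by omega); simpa using this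

lemma mvp {i j : ℕ} (s k : ℕ) (h : i < j) (hk : k = j + 1) : x j ^ s * x i = x i * x k ^ s := by
  have := mv s 1 k h (by omega); simpa using this

lemma mvq {i j : ℕ} (n k : ℕ) (h : i < j) (hk : k = j + n) : x j * x i ^ n = x i ^ n * x k := by
  have := mv 1 n k h hk; simpa using this

variable {G : Type*} [Group G] {a b c : G}

lemma swapL (h : a * b = b * c) : a⁻¹ * b = b * c⁻¹ := by
  calc a⁻¹ * b = a⁻¹ * (b * c) * c⁻¹ := by group
    _ = a⁻¹ * (a * b) * c⁻¹ := by rw [h]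
    _ = b * c⁻¹ := by group

lemma swapR (h : a * b = b * c) : c * b⁻¹ = b⁻¹ * a := by
  calc c * b⁻¹ = b⁻¹ * (b * c) * b⁻¹ := by group
    _ = b⁻¹ * (a * b) * b⁻¹ := by rw [h]
    _ = b⁻¹ * a := by group

lemma swapM (h : a * b = b * c) : b⁻¹ * a = c * b⁻¹ := by
  calc b⁻¹ * a = b⁻¹ * (a * b) * b⁻¹ := by group
    _ = b⁻¹ * (b * c) * b⁻¹ := by rw [h]
    _ = c * b⁻¹ := by group

lemma swapI (h : a * b = b * c) : c⁻¹ * b⁻¹ = b⁻¹ * a⁻¹ := by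
  have := congrArg Inv.inv h
  simp only [mul_inv_rev] at this
  exact this.symm

end Helpers

lemma thompson_key {G : Type*} [Group G] (n : ℕ) (a0 a1 a2 a3 a4 a5 a6 A3 A4 A5 A6 A7 A8 : G)
    (Ma : a4⁻¹ * a2 = a2 * a5⁻¹)
    (Mb : A6⁻¹ * a2 = a2 * A7⁻¹)
    (Mc : A5^2 * a2 = a2 * A6^2)
    (Md : A7⁻¹ * A6 = A6 * A8⁻¹)
    (Me : A5⁻¹ * a3⁻¹ = a3⁻¹ * A4⁻¹)
    (Mf : (A7^2)⁻¹ * a3⁻¹ = a3⁻¹ * (A6^2)⁻¹)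
    (Mg : A6^3 * a3⁻¹ = a3⁻¹ * A5^3)
    (Mh : A4⁻¹ * (a2^n)⁻¹ = (a2^n)⁻¹ * a4⁻¹)
    (Mi : (A6^2)⁻¹ * (a2^n)⁻¹ = (a2^n)⁻¹ * (a6^2)⁻¹)
    (Mj : A5^3 * (a2^n)⁻¹ = (a2^n)⁻¹ * a5^3)
    (Mk : a4⁻¹ * a0⁻¹ = a0⁻¹ * a3⁻¹)
    (Ml : (a6^2)⁻¹ * a0⁻¹ = a0⁻¹ * (a5^2)⁻¹)
    (Mm : a5^3 * a0⁻¹ = a0⁻¹ * a4^3)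
    (Mn : (a2^n)⁻¹ * a0⁻¹ = a0⁻¹ * (a1^n)⁻¹)
    (Mo : a3⁻¹ * a0⁻¹ = a0⁻¹ * a2⁻¹)
    (Mp : a2 * a0⁻¹ = a0⁻¹ * a1)
    (Mq : a2^n * a0⁻¹ = a0⁻¹ * a1^n)
    (Mr : (a1^n)⁻¹ * a4^3 = A4^3 * (a1^n)⁻¹)
    (Ms : (a1^n)⁻¹ * (a5^2)⁻¹ = (A5^2)⁻¹ * (a1^n)⁻¹)
    (Mt : (a1^n)⁻¹ * a3⁻¹ = A3⁻¹ * (a1^n)⁻¹)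
    (Mu : a2⁻¹ * A4^3 = A5^3 * a2⁻¹)
    (Mv : a2⁻¹ * (A5^2)⁻¹ = (A6^2)⁻¹ * a2⁻¹)
    (Mw : a2⁻¹ * A3⁻¹ = A4⁻¹ * a2⁻¹) :
    (a0^4 * a1^n * a4 * A6 * (A5^2)⁻¹ * (a2^n)⁻¹ * (a0^4)⁻¹)⁻¹ *
      (a0^4 * a1^n * a2 * a5 * A6 * A8 * (A7^2)⁻¹ * A5⁻¹ * a3⁻¹ * (a2^n)⁻¹ * (a0^4)⁻¹) =
    a0^3 * (a1^n * a1) * A5^3 * (A6^2)⁻¹ * A4⁻¹ * a2⁻¹ * (a1^n)⁻¹ * (a0^3)⁻¹ := by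
  calc
    (a0^4 * a1^n * a4 * A6 * (A5^2)⁻¹ * (a2^n)⁻¹ * (a0^4)⁻¹)⁻¹ *
      (a0^4 * a1^n * a2 * a5 * A6 * A8 * (A7^2)⁻¹ * A5⁻¹ * a3⁻¹ * (a2^n)⁻¹ * (a0^4)⁻¹)
      = a0^4 * a2^n * A5^2 * A6⁻¹ * (a4⁻¹ * a2) * a5 * A6 * A8 * (A7^2)⁻¹ * A5⁻¹ * a3⁻¹ *
          (a2^n)⁻¹ * (a0^4)⁻¹ := by group
    _ = a0^4 * a2^n * A5^2 * A6⁻¹ * (a2 * a5⁻¹) * a5 * A6 * A8 * (A7^2)⁻¹ * A5⁻¹ * a3⁻¹ *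
          (a2^n)⁻¹ * (a0^4)⁻¹ := by rw [Ma]
    _ = a0^4 * a2^n * A5^2 * (A6⁻¹ * a2) * A6 * A8 * (A7^2)⁻¹ * A5⁻¹ * a3⁻¹ *
          (a2^n)⁻¹ * (a0^4)⁻¹ := by group
    _ = a0^4 * a2^n * A5^2 * (a2 * A7⁻¹) * A6 * A8 * (A7^2)⁻¹ * A5⁻¹ * a3⁻¹ *
          (a2^n)⁻¹ * (a0^4)⁻¹ := by rw [Mb]
    _ = a0^4 * a2^n * (A5^2 * a2) * (A7⁻¹ * A6) * A8 * (A7^2)⁻¹ * A5⁻¹ * a3⁻¹ *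
          (a2^n)⁻¹ * (a0^4)⁻¹ := by group
    _ = a0^4 * a2^n * (a2 * A6^2) * (A6 * A8⁻¹) * A8 * (A7^2)⁻¹ * A5⁻¹ * a3⁻¹ *
          (a2^n)⁻¹ * (a0^4)⁻¹ := by rw [Mc, Md]
    _ = a0^4 * a2^n * a2 * A6^3 * (A7^2)⁻¹ * (A5⁻¹ * a3⁻¹) * (a2^n)⁻¹ * (a0^4)⁻¹ := by group
    _ = a0^4 * a2^n * a2 * A6^3 * (A7^2)⁻¹ * (a3⁻¹ * A4⁻¹) * (a2^n)⁻¹ * (a0^4)⁻¹ := by rw [Me]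
    _ = a0^4 * a2^n * a2 * A6^3 * ((A7^2)⁻¹ * a3⁻¹) * A4⁻¹ * (a2^n)⁻¹ * (a0^4)⁻¹ := by group
    _ = a0^4 * a2^n * a2 * A6^3 * (a3⁻¹ * (A6^2)⁻¹) * A4⁻¹ * (a2^n)⁻¹ * (a0^4)⁻¹ := by rw [Mf]
    _ = a0^4 * a2^n * a2 * (A6^3 * a3⁻¹) * (A6^2)⁻¹ * A4⁻¹ * (a2^n)⁻¹ * (a0^4)⁻¹ := by group
    _ = a0^4 * a2^n * a2 * (a3⁻¹ * A5^3) * (A6^2)⁻¹ * A4⁻¹ * (a2^n)⁻¹ * (a0^4)⁻¹ := by rw [Mg]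
    _ = a0^4 * a2^n * a2 * a3⁻¹ * A5^3 * (A6^2)⁻¹ * (A4⁻¹ * (a2^n)⁻¹) * (a0^4)⁻¹ := by group
    _ = a0^4 * a2^n * a2 * a3⁻¹ * A5^3 * (A6^2)⁻¹ * ((a2^n)⁻¹ * a4⁻¹) * (a0^4)⁻¹ := by rw [Mh]
    _ = a0^4 * a2^n * a2 * a3⁻¹ * A5^3 * ((A6^2)⁻¹ * (a2^n)⁻¹) * a4⁻¹ * (a0^4)⁻¹ := by group
    _ = a0^4 * a2^n * a2 * a3⁻¹ * A5^3 * ((a2^n)⁻¹ * (a6^2)⁻¹) * a4⁻¹ * (a0^4)⁻¹ := by rw [Mi]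
    _ = a0^4 * a2^n * a2 * a3⁻¹ * (A5^3 * (a2^n)⁻¹) * (a6^2)⁻¹ * a4⁻¹ * (a0^4)⁻¹ := by group
    _ = a0^4 * a2^n * a2 * a3⁻¹ * ((a2^n)⁻¹ * a5^3) * (a6^2)⁻¹ * a4⁻¹ * (a0^4)⁻¹ := by rw [Mj]
    _ = a0^4 * a2^n * a2 * a3⁻¹ * (a2^n)⁻¹ * a5^3 * (a6^2)⁻¹ * (a4⁻¹ * a0⁻¹) * (a0^3)⁻¹ := by
          group
    _ = a0^4 * a2^n * a2 * a3⁻¹ * (a2^n)⁻¹ * a5^3 * (a6^2)⁻¹ * (a0⁻¹ * a3⁻¹) * (a0^3)⁻¹ := by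
          rw [Mk]
    _ = a0^4 * a2^n * a2 * a3⁻¹ * (a2^n)⁻¹ * a5^3 * ((a6^2)⁻¹ * a0⁻¹) * a3⁻¹ * (a0^3)⁻¹ := by
          group
    _ = a0^4 * a2^n * a2 * a3⁻¹ * (a2^n)⁻¹ * a5^3 * (a0⁻¹ * (a5^2)⁻¹) * a3⁻¹ * (a0^3)⁻¹ := by
          rw [Ml]
    _ = a0^4 * a2^n * a2 * a3⁻¹ * (a2^n)⁻¹ * (a5^3 * a0⁻¹) * (a5^2)⁻¹ * a3⁻¹ * (a0^3)⁻¹ := by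
          group
    _ = a0^4 * a2^n * a2 * a3⁻¹ * (a2^n)⁻¹ * (a0⁻¹ * a4^3) * (a5^2)⁻¹ * a3⁻¹ * (a0^3)⁻¹ := by
          rw [Mm]
    _ = a0^4 * a2^n * a2 * a3⁻¹ * ((a2^n)⁻¹ * a0⁻¹) * a4^3 * (a5^2)⁻¹ * a3⁻¹ * (a0^3)⁻¹ := by
          group
    _ = a0^4 * a2^n * a2 * a3⁻¹ * (a0⁻¹ * (a1^n)⁻¹) * a4^3 * (a5^2)⁻¹ * a3⁻¹ * (a0^3)⁻¹ := by
          rw [Mn]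
    _ = a0^4 * a2^n * a2 * (a3⁻¹ * a0⁻¹) * (a1^n)⁻¹ * a4^3 * (a5^2)⁻¹ * a3⁻¹ * (a0^3)⁻¹ := by
          group
    _ = a0^4 * a2^n * a2 * (a0⁻¹ * a2⁻¹) * (a1^n)⁻¹ * a4^3 * (a5^2)⁻¹ * a3⁻¹ * (a0^3)⁻¹ := by
          rw [Mo]
    _ = a0^4 * a2^n * (a2 * a0⁻¹) * a2⁻¹ * (a1^n)⁻¹ * a4^3 * (a5^2)⁻¹ * a3⁻¹ * (a0^3)⁻¹ := by
          group
    _ = a0^4 * a2^n * (a0⁻¹ * a1) * a2⁻¹ * (a1^n)⁻¹ * a4^3 * (a5^2)⁻¹ * a3⁻¹ * (a0^3)⁻¹ := by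
          rw [Mp]
    _ = a0^4 * (a2^n * a0⁻¹) * a1 * a2⁻¹ * (a1^n)⁻¹ * a4^3 * (a5^2)⁻¹ * a3⁻¹ * (a0^3)⁻¹ := by
          group
    _ = a0^4 * (a0⁻¹ * a1^n) * a1 * a2⁻¹ * (a1^n)⁻¹ * a4^3 * (a5^2)⁻¹ * a3⁻¹ * (a0^3)⁻¹ := by
          rw [Mq]
    _ = a0^3 * a1^n * a1 * a2⁻¹ * ((a1^n)⁻¹ * a4^3) * (a5^2)⁻¹ * a3⁻¹ * (a0^3)⁻¹ := by group
    _ = a0^3 * a1^n * a1 * a2⁻¹ * (A4^3 * (a1^n)⁻¹) * (a5^2)⁻¹ * a3⁻¹ * (a0^3)⁻¹ := by rw [Mr]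
    _ = a0^3 * a1^n * a1 * a2⁻¹ * A4^3 * ((a1^n)⁻¹ * (a5^2)⁻¹) * a3⁻¹ * (a0^3)⁻¹ := by group
    _ = a0^3 * a1^n * a1 * a2⁻¹ * A4^3 * ((A5^2)⁻¹ * (a1^n)⁻¹) * a3⁻¹ * (a0^3)⁻¹ := by rw [Ms]
    _ = a0^3 * a1^n * a1 * a2⁻¹ * A4^3 * (A5^2)⁻¹ * ((a1^n)⁻¹ * a3⁻¹) * (a0^3)⁻¹ := by group
    _ = a0^3 * a1^n * a1 * a2⁻¹ * A4^3 * (A5^2)⁻¹ * (A3⁻¹ * (a1^n)⁻¹) * (a0^3)⁻¹ := by rw [Mt]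
    _ = a0^3 * a1^n * a1 * (a2⁻¹ * A4^3) * (A5^2)⁻¹ * A3⁻¹ * (a1^n)⁻¹ * (a0^3)⁻¹ := by group
    _ = a0^3 * a1^n * a1 * (A5^3 * a2⁻¹) * (A5^2)⁻¹ * A3⁻¹ * (a1^n)⁻¹ * (a0^3)⁻¹ := by rw [Mu]
    _ = a0^3 * a1^n * a1 * A5^3 * (a2⁻¹ * (A5^2)⁻¹) * A3⁻¹ * (a1^n)⁻¹ * (a0^3)⁻¹ := by group
    _ = a0^3 * a1^n * a1 * A5^3 * ((A6^2)⁻¹ * a2⁻¹) * A3⁻¹ * (a1^n)⁻¹ * (a0^3)⁻¹ := by rw [Mv]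
    _ = a0^3 * a1^n * a1 * A5^3 * (A6^2)⁻¹ * (a2⁻¹ * A3⁻¹) * (a1^n)⁻¹ * (a0^3)⁻¹ := by group
    _ = a0^3 * a1^n * a1 * A5^3 * (A6^2)⁻¹ * (A4⁻¹ * a2⁻¹) * (a1^n)⁻¹ * (a0^3)⁻¹ := by rw [Mw]
    _ = a0^3 * (a1^n * a1) * A5^3 * (A6^2)⁻¹ * A4⁻¹ * a2⁻¹ * (a1^n)⁻¹ * (a0^3)⁻¹ := by group

/-- With `z = x_0⁴ x_1^{2i} x_4 x_{2i+6} x_{2i+5}⁻² x_2^{-2i} x_0⁻⁴`,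
`w = x_0⁴ x_1^{2i} x_2 x_5 x_{2i+6} x_{2i+8} x_{2i+7}⁻² x_{2i+5}⁻¹ x_3⁻¹ x_2^{-2i} x_0⁻⁴`
and `p = z⁻¹ w`, for `i ≥ 1` one has
`p = x_0³ x_1^{2i+1} x_{2i+5}³ x_{2i+6}⁻² x_{2i+4}⁻¹ x_2⁻¹ x_1^{-2i} x_0⁻³`. -/
theorem p_normal_form (i : ℕ) (hi : 1 ≤ i) (z w : ThompsonF)
    (hz : z = x 0 ^ 4 * x 1 ^ (2 * i) * x 4 * x (2 * i + 6) * (x (2 * i + 5)) ^ (-2 : ℤ) *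
      (x 2) ^ (-(2 * i : ℤ)) * (x 0) ^ (-4 : ℤ))
    (hw : w = x 0 ^ 4 * x 1 ^ (2 * i) * x 2 * x 5 * x (2 * i + 6) * x (2 * i + 8) *
      (x (2 * i + 7)) ^ (-2 : ℤ) * (x (2 * i + 5))⁻¹ * (x 3)⁻¹ *
      (x 2) ^ (-(2 * i : ℤ)) * (x 0) ^ (-4 : ℤ)) :
    z⁻¹ * w =
      x 0 ^ 3 * x 1 ^ (2 * i + 1) * (x (2 * i + 5)) ^ 3 * (x (2 * i + 6)) ^ (-2 : ℤ) *
        (x (2 * i + 4))⁻¹ * (x 2)⁻¹ * (x 1) ^ (-(2 * i : ℤ)) * (x 0) ^ (-3 : ℤ) := by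
  have hc : ∀ g : ThompsonF, g ^ (-(2 * i : ℤ)) = (g ^ (2 * i))⁻¹ := fun g => by
    rw [zpow_neg, ← zpow_natCast]; norm_cast
  have e2 : ∀ g : ThompsonF, g ^ (-2 : ℤ) = (g ^ 2)⁻¹ := fun g => by
    rw [zpow_neg]; norm_cast
  have e3 : ∀ g : ThompsonF, g ^ (-3 : ℤ) = (g ^ 3)⁻¹ := fun g => by
    rw [zpow_neg]; norm_cast
  have e4 : ∀ g : ThompsonF, g ^ (-4 : ℤ) = (g ^ 4)⁻¹ := fun g => by
    rw [zpow_neg]; norm_cast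
  have Ma : (x 4)⁻¹ * x 2 = x 2 * (x 5)⁻¹ := swapL (xrel (by omega))
  have Mb : (x (2*i+6))⁻¹ * x 2 = x 2 * (x (2*i+7))⁻¹ :=
    swapL (mv1 (2*i+7) (by omega) (by omega))
  have Mc : x (2*i+5) ^ 2 * x 2 = x 2 * x (2*i+6) ^ 2 := mvp 2 (2*i+6) (by omega) (by omega)
  have Md : (x (2*i+7))⁻¹ * x (2*i+6) = x (2*i+6) * (x (2*i+8))⁻¹ :=
    swapL (mv1 (2*i+8) (by omega) (by omega))
  have Me : (x (2*i+5))⁻¹ * (x 3)⁻¹ = (x 3)⁻¹ * (x (2*i+4))⁻¹ :=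
    swapI (mv1 (2*i+5) (show 3 < 2*i+4 by omega) (by omega))
  have Mf : (x (2*i+7) ^ 2)⁻¹ * (x 3)⁻¹ = (x 3)⁻¹ * (x (2*i+6) ^ 2)⁻¹ :=
    swapI (mvp 2 (2*i+7) (show 3 < 2*i+6 by omega) (by omega))
  have Mg : x (2*i+6) ^ 3 * (x 3)⁻¹ = (x 3)⁻¹ * x (2*i+5) ^ 3 :=
    swapR (mvp 3 (2*i+6) (show 3 < 2*i+5 by omega) (by omega))
  have Mh : (x (2*i+4))⁻¹ * (x 2 ^ (2*i))⁻¹ = (x 2 ^ (2*i))⁻¹ * (x 4)⁻¹ :=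
    swapI (mvq (2*i) (2*i+4) (show 2 < 4 by omega) (by omega))
  have Mi : (x (2*i+6) ^ 2)⁻¹ * (x 2 ^ (2*i))⁻¹ = (x 2 ^ (2*i))⁻¹ * (x 6 ^ 2)⁻¹ :=
    swapI (mv 2 (2*i) (2*i+6) (show 2 < 6 by omega) (by omega))
  have Mj : x (2*i+5) ^ 3 * (x 2 ^ (2*i))⁻¹ = (x 2 ^ (2*i))⁻¹ * x 5 ^ 3 :=
    swapR (mv 3 (2*i) (2*i+5) (show 2 < 5 by omega) (by omega))
  have Mk : (x 4)⁻¹ * (x 0)⁻¹ = (x 0)⁻¹ * (x 3)⁻¹ :=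
    swapI (mv1 4 (show 0 < 3 by omega) (by omega))
  have Ml : (x 6 ^ 2)⁻¹ * (x 0)⁻¹ = (x 0)⁻¹ * (x 5 ^ 2)⁻¹ :=
    swapI (mvp 2 6 (show 0 < 5 by omega) (by omega))
  have Mm : x 5 ^ 3 * (x 0)⁻¹ = (x 0)⁻¹ * x 4 ^ 3 :=
    swapR (mvp 3 5 (show 0 < 4 by omega) (by omega))
  have Mn : (x 2 ^ (2*i))⁻¹ * (x 0)⁻¹ = (x 0)⁻¹ * (x 1 ^ (2*i))⁻¹ :=
    swapI (mvp (2*i) 2 (show 0 < 1 by omega) (by omega))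
  have Mo : (x 3)⁻¹ * (x 0)⁻¹ = (x 0)⁻¹ * (x 2)⁻¹ :=
    swapI (mv1 3 (show 0 < 2 by omega) (by omega))
  have Mp : x 2 * (x 0)⁻¹ = (x 0)⁻¹ * x 1 :=
    swapR (mv1 2 (show 0 < 1 by omega) (by omega))
  have Mq : x 2 ^ (2*i) * (x 0)⁻¹ = (x 0)⁻¹ * x 1 ^ (2*i) :=
    swapR (mvp (2*i) 2 (show 0 < 1 by omega) (by omega))
  have Mr : (x 1 ^ (2*i))⁻¹ * x 4 ^ 3 = x (2*i+4) ^ 3 * (x 1 ^ (2*i))⁻¹ :=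
    swapM (mv 3 (2*i) (2*i+4) (show 1 < 4 by omega) (by omega))
  have Ms : (x 1 ^ (2*i))⁻¹ * (x 5 ^ 2)⁻¹ = (x (2*i+5) ^ 2)⁻¹ * (x 1 ^ (2*i))⁻¹ :=
    (swapI (mv 2 (2*i) (2*i+5) (show 1 < 5 by omega) (by omega))).symm
  have Mt : (x 1 ^ (2*i))⁻¹ * (x 3)⁻¹ = (x (2*i+3))⁻¹ * (x 1 ^ (2*i))⁻¹ :=
    (swapI (mvq (2*i) (2*i+3) (show 1 < 3 by omega) (by omega))).symm
  have Mu : (x 2)⁻¹ * x (2*i+4) ^ 3 = x (2*i+5) ^ 3 * (x 2)⁻¹ :=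
    swapM (mvp 3 (2*i+5) (show 2 < 2*i+4 by omega) (by omega))
  have Mv : (x 2)⁻¹ * (x (2*i+5) ^ 2)⁻¹ = (x (2*i+6) ^ 2)⁻¹ * (x 2)⁻¹ :=
    (swapI (mvp 2 (2*i+6) (show 2 < 2*i+5 by omega) (by omega))).symm
  have Mw : (x 2)⁻¹ * (x (2*i+3))⁻¹ = (x (2*i+4))⁻¹ * (x 2)⁻¹ :=
    (swapI (mv1 (2*i+4) (show 2 < 2*i+3 by omega) (by omega))).symm
  subst hz hw
  simp only [hc, e2, e3, e4, pow_succ]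
  exact thompson_key (2*i) (x 0) (x 1) (x 2) (x 3) (x 4) (x 5) (x 6)
    (x (2*i+3)) (x (2*i+4)) (x (2*i+5)) (x (2*i+6)) (x (2*i+7)) (x (2*i+8))
    Ma Mb Mc Md Me Mf Mg Mh Mi Mj Mk Ml Mm Mn Mo Mp Mq Mr Ms Mt Mu Mv Mw
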